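/- arXiv:1501.02289 — 5 statements merged into one kernel-verified Lean document; each statement's English description precedes it below -/
import Mathlib

section
/- For every natural number i, ∫₀¹ (u² + 1)/(1 + u)⁴ · ((1 - u)/(1 + u))^(2i) du = (i + 1) / (4 · (i + 1/2) · (i + 3/2)). -/
open MeasureTheory

theorem rational_integral_i (i : ℕ) :
    ∫ u in (0:ℝ)..1, (u^2 + 1) / (1 + u)^4 * ((1 - u) / (1 + u))^(2*i) =
      ((i:ℝ) + 1) / (4 * ((i:ℝ) + 1/2) * ((i:ℝ) + 3/2)) := by
  set F : ℝ → ℝ := fun u =>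
    -(1/(4*(2*(i:ℝ)+1))) * ((1-u)/(1+u))^(2*i+1)
    - (1/(4*(2*(i:ℝ)+3))) * ((1-u)/(1+u))^(2*i+3) with hF
  have key : ∀ u ∈ Set.uIcc (0:ℝ) 1,
      HasDerivAt F ((u^2 + 1) / (1 + u)^4 * ((1 - u) / (1 + u))^(2*i)) u := by
    intro u hu
    rw [Set.uIcc_of_le (by norm_num)] at hu
    have h1 : (1:ℝ) + u ≠ 0 := by nlinarith [hu.1]
    have hg : HasDerivAt (fun u : ℝ => (1-u)/(1+u)) (-2/(1+u)^2) u := by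
      have h := ((hasDerivAt_id u).const_sub 1).div ((hasDerivAt_id u).const_add 1) h1
      convert h using 1
      · rfl
      · rfl
      · rfl
      simp only [id]
      ring
    have hp1 := (hg.pow (2*i+1)).const_mul (-(1/(4*(2*(i:ℝ)+1))))
    have hp2 := (hg.pow (2*i+3)).const_mul (1/(4*(2*(i:ℝ)+3)))
    have := hp1.sub hp2
    convert this using 1
    · rfl
    · rfl
    · rfl
    have hne : ((1:ℝ)+u)^2 ≠ 0 := pow_ne_zero _ h1
    simp only [Nat.add_sub_cancel]
    push_cast
    simp only [div_pow]
    field_simp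
    ring
  have hcont : IntervalIntegrable
      (fun u : ℝ => (u^2 + 1) / (1 + u)^4 * ((1 - u) / (1 + u))^(2*i))
      volume 0 1 := by
    apply ContinuousOn.intervalIntegrable
    apply ContinuousOn.mul
    · apply ContinuousOn.div (by fun_prop) (by fun_prop)
      intro u hu
      rw [Set.uIcc_of_le (by norm_num)] at hu
      have : (1:ℝ) + u ≠ 0 := by nlinarith [hu.1]
      positivity
    · apply ContinuousOn.pow
      apply ContinuousOn.div (by fun_prop) (by fun_prop)
      intro u hu
      rw [Set.uIcc_of_le (by norm_num)] at hu
      nlinarith [hu.1]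
  rw [intervalIntegral.integral_eq_sub_of_hasDerivAt key hcont]
  have h1 : 2*(i:ℝ)+1 ≠ 0 := by positivity
  have h3 : 2*(i:ℝ)+3 ≠ 0 := by positivity
  have h12 : (i:ℝ)+1/2 ≠ 0 := by positivity
  have h32 : (i:ℝ)+3/2 ≠ 0 := by positivity
  simp only [hF]
  norm_num
  field_simp
  ring
end

section
/- For every natural number n ≥ 1, every real k > -1, and every real α ≥ 1, the function v ↦ ∑_{j=0}^{n-1} (-1)^(j+1) · (1-n)_j / ((k+1)_(j+1)) · v^(n-1-j) · (1-v)^(k+j+1) has derivative v ↦ v^(n-1) · (1-v)^k at every v ∈ (0,1), where (t)_j is the Pochhammer symbol. (Here n plays the role of the integer parameter α.) -/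
/-- Pochhammer symbol (rising factorial) on the reals. -/
def poch (t : ℝ) : ℕ → ℝ
  | 0 => 1
  | n + 1 => poch t n * (t + n)

lemma poch_succ (t : ℝ) (i : ℕ) : poch t (i+1) = poch t i * (t + i) := rfl

lemma poch_pos {k : ℝ} (hk : -1 < k) : ∀ m, 0 < poch (k + 1) m
  | 0 => one_pos
  | m + 1 => by
    have h1 := poch_pos hk m
    have h2 : (0:ℝ) < k + 1 + m := by
      have : (0:ℝ) ≤ (m:ℝ) := Nat.cast_nonneg m
      linarith
    simpa [poch] using mul_pos h1 h2

theorem antiderivative_formula (n : ℕ) (hn : 1 ≤ n) (k : ℝ) (hk : -1 < k)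
    (v : ℝ) (hv : v ∈ Set.Ioo (0:ℝ) 1) :
    HasDerivAt (fun v : ℝ => ∑ j ∈ Finset.range n,
        (-1:ℝ)^(j+1) * poch (1 - (n:ℝ)) j / poch (k + 1) (j + 1) *
          v^(n - 1 - j) * (1 - v) ^ (k + (j:ℝ) + 1))
      (v^(n-1) * (1 - v) ^ k) v := by
  obtain ⟨m, rfl⟩ : ∃ m, n = m + 1 := ⟨n - 1, (Nat.succ_pred_eq_of_pos hn).symm⟩
  obtain ⟨hv0, hv1⟩ := hv
  have h1v : (0:ℝ) < 1 - v := by linarith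
  have hk1 : (0:ℝ) < k + 1 := by linarith
  set c : ℕ → ℝ := fun j => (-1:ℝ)^(j+1) * poch (1 - ((m+1:ℕ):ℝ)) j / poch (k + 1) (j + 1)
    with hc
  set A : ℕ → ℝ := fun j => c j * (↑(m - j) * v ^ (m - j - 1)) * (1 - v) ^ (k + (j:ℝ) + 1)
    with hA
  set B : ℕ → ℝ := fun j =>
    c j * v ^ (m - j) * (-1 * ((k + (j:ℝ) + 1) * (1 - v) ^ (k + (j:ℝ) + 1 - 1))) with hB
  have key : ∀ j : ℕ, c j * ((m:ℝ) - j) = c (j+1) * (k + j + 2) := by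
    intro j
    have p1 : poch (k+1) (j+1) ≠ 0 := ne_of_gt (poch_pos hk _)
    have p2 : (k + 1 + (((j:ℕ)+1:ℕ):ℝ)) ≠ 0 := by
      have : (0:ℝ) ≤ (j:ℝ) := Nat.cast_nonneg j
      push_cast
      intro h; linarith
    simp only [hc]
    rw [poch_succ (1 - ((m+1:ℕ):ℝ)) j, poch_succ (k+1) (j+1)]
    field_simp
    push_cast
    ring
  -- derivative of each term
  have hderiv : ∀ j ∈ Finset.range (m+1),
      HasDerivAt (fun v : ℝ => c j * v ^ (m - j) * (1 - v) ^ (k + (j:ℝ) + 1))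
        (A j + B j) v := by
    intro j _
    have h1 : HasDerivAt (fun v : ℝ => c j * v ^ (m - j))
        (c j * (↑(m - j) * v ^ (m - j - 1))) v := (hasDerivAt_pow (m - j) v).const_mul (c j)
    have hbase : HasDerivAt (fun v : ℝ => 1 - v) (-1) v := by
      simpa using (hasDerivAt_id v).const_sub (1:ℝ)
    have h2 : HasDerivAt (fun v : ℝ => (1 - v) ^ (k + (j:ℝ) + 1))
        (-1 * ((k + (j:ℝ) + 1) * (1 - v) ^ (k + (j:ℝ) + 1 - 1))) v := by
      have := hbase.rpow_const (p := k + (j:ℝ) + 1) (Or.inl (ne_of_gt h1v))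
      convert this using 1
      ring
    have : HasDerivAt (fun v : ℝ => c j * v ^ (m - j) * (1 - v) ^ (k + (j:ℝ) + 1)) _ v := h1.mul h2
    convert this using 1
    try simp only [hA, hB]
    try ring
  have hsum := HasDerivAt.fun_sum hderiv
  have hAm : A m = 0 := by simp [hA]
  have hfinal : ∑ j ∈ Finset.range (m+1), (A j + B j) = v ^ m * (1 - v) ^ k := by
    rw [Finset.sum_add_distrib, Finset.sum_range_succ, hAm, add_zero,
      Finset.sum_range_succ']
    have hcancel : ∀ j ∈ Finset.range m, A j = - B (j+1) := by
      intro j hj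
      have hjm : j < m := Finset.mem_range.mp hj
      have hcast : (↑(m - j) : ℝ) = (m:ℝ) - j := by
        push_cast [Nat.cast_sub hjm.le]; ring
      have hexp2 : k + (((j:ℕ)+1:ℕ):ℝ) + 1 = k + (j:ℝ) + 2 := by push_cast; ring
      have hexp3 : k + (j:ℝ) + 2 - 1 = k + (j:ℝ) + 1 := by ring
      have hpow : m - (j+1) = m - j - 1 := by omega
      simp only [hA, hB, hcast, hexp2, hexp3, hpow]
      linear_combination (v ^ (m - j - 1) * (1 - v) ^ (k + (j:ℝ) + 1)) * key j
    have h0 : ∑ j ∈ Finset.range m, A j + (∑ j ∈ Finset.range m, B (j+1) + B 0) = B 0 := by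
      rw [Finset.sum_congr rfl hcancel, Finset.sum_neg_distrib]
      ring
    rw [h0]
    have hB0 : B 0 = v ^ m * (1 - v) ^ k := by
      simp only [hB, hc, poch]
      norm_num
      field_simp
      try ring
    rw [hB0]
  rw [hfinal] at hsum
  simpa only [Nat.add_sub_cancel] using hsum
end

section
/- Define S(m,n) = ∑_{i=0}^{m} ∑_{j=0}^{n} [(-m)_i (n+1)_i / (i! (m+n+2)_i)] · [(-n)_j (1/2 - n)_j / (j! (1/2)_j)] · 1/(i + j + 1/2) for natural numbers m, n. Then S(m,n) = 2^(2m+2n) · m! (m+n)! (m+n+1)! (1/2)_n / (n! (n+2m+1)! (1/2)_(m+n+1)). -/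
open intervalIntegral Finset

lemma fact_ne (a : ℕ) : (a.factorial : ℝ) ≠ 0 := by
  exact_mod_cast a.factorial_ne_zero

lemma poch_half (k : ℕ) : poch (1/2) k = (2*k).factorial / (4^k * k.factorial) := by
  induction k with
  | zero => simp [poch]
  | succ k ih =>
    have h2 : (2*(k+1)) = (2*k+1)+1 := by ring
    rw [show poch (1/2) (k+1) = poch (1/2) k * (1/2 + k) from rfl, ih, h2,
      Nat.factorial_succ, Nat.factorial_succ, Nat.factorial_succ]
    have h4 : (4:ℝ)^(k+1) = 4*4^k := by ring
    rw [h4]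
    push_cast
    have h5 : ((2:ℝ)*k+1+1) ≠ 0 := by positivity
    have := fact_ne k
    have := fact_ne (2*k)
    have h6 : (4:ℝ)^k ≠ 0 := by positivity
    field_simp
    ring

lemma poch_nat_succ (a : ℕ) (i : ℕ) : poch ((a:ℝ)+1) i = (a+i).factorial / a.factorial := by
  induction i with
  | zero => simp [poch, fact_ne a]
  | succ i ih =>
    rw [show poch ((a:ℝ)+1) (i+1) = poch ((a:ℝ)+1) i * ((a:ℝ)+1+i) from rfl, ih,
      show a+(i+1) = (a+i)+1 from rfl, Nat.factorial_succ]
    push_cast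
    field_simp
    ring


lemma poch_neg_aux (k : ℕ) : ∀ D : ℕ, poch (-((k+D:ℕ)):ℝ) k = (-1)^k * (k+D).factorial / D.factorial := by
  induction k with
  | zero => intro D; simp [poch, fact_ne D]
  | succ k ih =>
    intro D
    rw [show poch (-((k+1+D:ℕ)):ℝ) (k+1) = poch (-((k+1+D:ℕ)):ℝ) k * (-((k+1+D:ℕ):ℝ) + k) from rfl]
    have e1 : (-((k+1+D:ℕ):ℝ)) = (-((k+(D+1):ℕ):ℝ)) := by push_cast; ring
    rw [e1, ih (D+1)]
    have e2 : (k+1+D).factorial = (k+(D+1)).factorial := by ring_nf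
    rw [e2, Nat.factorial_succ]
    push_cast
    field_simp
    ring

lemma poch_neg (nn k : ℕ) (h : k ≤ nn) :
    poch (-(nn:ℝ)) k = (-1)^k * nn.factorial / (nn-k).factorial := by
  obtain ⟨D, rfl⟩ : ∃ D, nn = k + D := ⟨nn - k, by omega⟩
  rw [poch_neg_aux k D, show k + D - k = D from by omega]

lemma poch_neg_half_aux (k : ℕ) : ∀ D : ℕ,
    poch (-((k+D:ℕ)):ℝ) k * poch (1/2 - ((k+D:ℕ):ℝ)) k
      = (2*(k+D)).factorial / (4^k * (2*D).factorial) := by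
  induction k with
  | zero => intro D; simp [poch, fact_ne (2*D)]
  | succ k ih =>
    intro D
    rw [show poch (-((k+1+D:ℕ)):ℝ) (k+1) = poch (-((k+1+D:ℕ)):ℝ) k * (-((k+1+D:ℕ):ℝ) + k) from rfl,
        show poch (1/2 - ((k+1+D:ℕ):ℝ)) (k+1)
           = poch (1/2 - ((k+1+D:ℕ):ℝ)) k * (1/2 - ((k+1+D:ℕ):ℝ) + k) from rfl]
    have e1 : (((k+1+D:ℕ)):ℝ) = (((k+(D+1):ℕ)):ℝ) := by push_cast; ring
    rw [e1]
    have e2 : poch (-((k+(D+1):ℕ)):ℝ) k * (-(((k+(D+1):ℕ)):ℝ) + k)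
        * (poch (1/2 - ((k+(D+1):ℕ):ℝ)) k * (1/2 - ((k+(D+1):ℕ):ℝ) + k))
        = (poch (-((k+(D+1):ℕ)):ℝ) k * poch (1/2 - ((k+(D+1):ℕ):ℝ)) k)
          * ((-(((k+(D+1):ℕ)):ℝ) + k) * (1/2 - ((k+(D+1):ℕ):ℝ) + k)) := by ring
    rw [e2, ih (D+1)]
    have e3 : (2*(k+1+D)).factorial = (2*(k+(D+1))).factorial := by ring_nf
    rw [e3, show 2*(D+1) = (2*D+1)+1 from by ring, Nat.factorial_succ, Nat.factorial_succ]
    push_cast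
    have := fact_ne (2*D)
    have h4 : (4:ℝ)^k ≠ 0 := by positivity
    have h5 : (2:ℝ)*D+1 ≠ 0 := by positivity
    field_simp
    ring

lemma poch_neg_half (nn k : ℕ) (h : k ≤ nn) :
    poch (-(nn:ℝ)) k * poch (1/2 - (nn:ℝ)) k
      = (2*nn).factorial / (4^k * (2*(nn-k)).factorial) := by
  obtain ⟨D, rfl⟩ : ∃ D, nn = k + D := ⟨nn - k, by omega⟩
  rw [poch_neg_half_aux k D, show k + D - k = D from by omega]

lemma cj_eq (n j : ℕ) (h : j ≤ n) :
    poch (-(n:ℝ)) j * poch (1/2 - (n:ℝ)) j / (j.factorial * poch (1/2) j)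
      = ((2*n).choose (2*j) : ℝ) := by
  rw [poch_neg_half n j h, poch_half j, Nat.cast_choose ℝ (by omega : 2*j ≤ 2*n),
    show 2*n - 2*j = 2*(n-j) from by omega]
  have := fact_ne j
  have := fact_ne (2*j)
  have := fact_ne (2*n)
  have := fact_ne (2*(n-j))
  have h4 : (4:ℝ)^j ≠ 0 := by positivity
  field_simp

lemma ai_eq (m n i : ℕ) (h : i ≤ m) :
    poch (-(m:ℝ)) i * poch ((n:ℝ)+1) i / (i.factorial * poch ((m:ℝ)+(n:ℝ)+2) i)
      = (-1)^i * (m.choose i : ℝ) * (n+i).factorial * (m+n+1).factorial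
        / (n.factorial * (m+n+1+i).factorial) := by
  have e1 : (m:ℝ)+(n:ℝ)+2 = ((m+n+1:ℕ):ℝ)+1 := by push_cast; ring
  rw [e1, poch_nat_succ (m+n+1) i, poch_neg m i h, poch_nat_succ n i,
    Nat.cast_choose ℝ h]
  have := fact_ne i
  have := fact_ne n
  have := fact_ne m
  have := fact_ne (m-i)
  have := fact_ne (m+n+1)
  have := fact_ne (m+n+1+i)
  have := fact_ne (n+i)
  field_simp



open intervalIntegral in
lemma Jint : ∀ a b : ℕ, ∫ t in (-1:ℝ)..1, (1-t)^a*(1+t)^b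
    = 2^(a+b+1)*a.factorial*b.factorial/(a+b+1).factorial := by
  intro a
  induction a with
  | zero =>
    intro b
    have hd : ∀ t ∈ Set.uIcc (-1:ℝ) 1, HasDerivAt (fun t : ℝ => (1+t)^(b+1)/(b+1))
        ((1-t)^0*(1+t)^b) t := by
      intro t _
      have h1 : HasDerivAt (fun t : ℝ => (1+t)^(b+1)) (((b+1:ℕ):ℝ) * (1+t)^b * 1) t := by
        simpa using (((hasDerivAt_id t).const_add 1).fun_pow (b+1))
      have := h1.div_const ((b:ℝ)+1)
      refine this.congr_deriv ?_
      have : ((b:ℝ)+1) ≠ 0 := by positivity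
      push_cast
      field_simp
    rw [integral_eq_sub_of_hasDerivAt hd
      ((Continuous.intervalIntegrable (by continuity) _ _))]
    have : ((b:ℝ)+1) ≠ 0 := by positivity
    rw [Nat.factorial_succ]
    push_cast
    have := fact_ne b
    field_simp
    ring
  | succ a ih =>
    intro b
    have key : (∫ t in (-1:ℝ)..1,
        (((a:ℝ)+1) * (1-t)^a * (-1) * (1+t)^(b+1) + (1-t)^(a+1) * (((b:ℝ)+1) * (1+t)^b)))
        = 0 := by
      have hd : ∀ t ∈ Set.uIcc (-1:ℝ) 1, HasDerivAt (fun t : ℝ => (1-t)^(a+1)*(1+t)^(b+1))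
          (((a:ℝ)+1) * (1-t)^a * (-1) * (1+t)^(b+1) + (1-t)^(a+1) * (((b:ℝ)+1) * (1+t)^b)) t := by
        intro t _
        have h1 : HasDerivAt (fun t : ℝ => (1-t)^(a+1)) (((a:ℝ)+1) * (1-t)^a * (-1)) t := by
          have := ((hasDerivAt_id t).neg.const_add 1).fun_pow (a+1)
          simpa [sub_eq_add_neg] using this
        have h2 : HasDerivAt (fun t : ℝ => (1+t)^(b+1)) (((b:ℝ)+1) * (1+t)^b) t := by
          have := ((hasDerivAt_id t).const_add 1).fun_pow (b+1)
          simpa using this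
        simpa using h1.fun_mul h2
      rw [integral_eq_sub_of_hasDerivAt hd
        ((Continuous.intervalIntegrable (by continuity) _ _))]
      norm_num
    rw [integral_add ((Continuous.intervalIntegrable (by continuity) _ _))
      ((Continuous.intervalIntegrable (by continuity) _ _))] at key
    have e1 : (∫ t in (-1:ℝ)..1, ((a:ℝ)+1) * (1-t)^a * (-1) * (1+t)^(b+1))
        = -(((a:ℝ)+1)) * ∫ t in (-1:ℝ)..1, (1-t)^a * (1+t)^(b+1) := by
      rw [← integral_const_mul]
      congr 1; funext t; ring
    have e2 : (∫ t in (-1:ℝ)..1, (1-t)^(a+1) * (((b:ℝ)+1) * (1+t)^b))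
        = ((b:ℝ)+1) * ∫ t in (-1:ℝ)..1, (1-t)^(a+1) * (1+t)^b := by
      rw [← integral_const_mul]
      congr 1; funext t; ring
    rw [e1, e2, ih (b+1)] at key
    have hb : ((b:ℝ)+1) ≠ 0 := by positivity
    have : (∫ t in (-1:ℝ)..1, (1-t)^(a+1) * (1+t)^b)
        = (((a:ℝ)+1)/((b:ℝ)+1)) * (2^(a+(b+1)+1)*a.factorial*(b+1).factorial/(a+(b+1)+1).factorial) := by
      field_simp at key ⊢
      linarith [key]
    rw [this, show a+1+b+1 = a+(b+1)+1 from by omega, Nat.factorial_succ a, Nat.factorial_succ b]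
    push_cast
    have := fact_ne (a+(b+1)+1)
    have := fact_ne a
    have := fact_ne b
    have hb2 : ((b:ℝ)+1) ≠ 0 := by positivity
    field_simp

open intervalIntegral in
lemma B01 : ∀ b a : ℕ, ∫ x in (0:ℝ)..1, x^a*(1-x)^b
    = a.factorial*b.factorial/(a+b+1).factorial := by
  intro b
  induction b with
  | zero =>
    intro a
    simp only [pow_zero, mul_one]
    rw [integral_pow]
    rw [Nat.factorial_succ]
    push_cast
    have := fact_ne a
    have : ((a:ℝ)+1) ≠ 0 := by positivity
    field_simp
    simp
  | succ b ih =>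
    intro a
    have key : (∫ x in (0:ℝ)..1,
        (((a:ℝ)+1) * x^a * (1-x)^(b+1) + x^(a+1) * (((b:ℝ)+1) * (1-x)^b * (-1))))
        = 0 := by
      have hd : ∀ x ∈ Set.uIcc (0:ℝ) 1, HasDerivAt (fun x : ℝ => x^(a+1)*(1-x)^(b+1))
          (((a:ℝ)+1) * x^a * (1-x)^(b+1) + x^(a+1) * (((b:ℝ)+1) * (1-x)^b * (-1))) x := by
        intro x _
        have h1 : HasDerivAt (fun x : ℝ => x^(a+1)) (((a:ℝ)+1) * x^a) x := by
          simpa using (hasDerivAt_id x).fun_pow (a+1)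
        have h2 : HasDerivAt (fun x : ℝ => (1-x)^(b+1)) (((b:ℝ)+1) * (1-x)^b * (-1)) x := by
          have := ((hasDerivAt_id x).neg.const_add 1).fun_pow (b+1)
          simpa [sub_eq_add_neg] using this
        simpa using h1.fun_mul h2
      rw [integral_eq_sub_of_hasDerivAt hd
        ((Continuous.intervalIntegrable (by continuity) _ _))]
      norm_num
    rw [integral_add ((Continuous.intervalIntegrable (by continuity) _ _))
      ((Continuous.intervalIntegrable (by continuity) _ _))] at key
    have e1 : (∫ x in (0:ℝ)..1, ((a:ℝ)+1) * x^a * (1-x)^(b+1))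
        = ((a:ℝ)+1) * ∫ x in (0:ℝ)..1, x^a * (1-x)^(b+1) := by
      rw [← integral_const_mul]; congr 1; funext x; ring
    have e2 : (∫ x in (0:ℝ)..1, x^(a+1) * (((b:ℝ)+1) * (1-x)^b * (-1)))
        = -(((b:ℝ)+1)) * ∫ x in (0:ℝ)..1, x^(a+1) * (1-x)^b := by
      rw [← integral_const_mul]; congr 1; funext x; ring
    rw [e1, e2, ih (a+1)] at key
    have ha : ((a:ℝ)+1) ≠ 0 := by positivity
    have hb : ((b:ℝ)+1) ≠ 0 := by positivity
    have : (∫ x in (0:ℝ)..1, x^a * (1-x)^(b+1))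
        = (((b:ℝ)+1)/((a:ℝ)+1)) * ((a+1).factorial*b.factorial/(a+1+b+1).factorial) := by
      field_simp at key ⊢
      linarith [key]
    rw [this, Nat.factorial_succ a, Nat.factorial_succ b,
      show a+(b+1)+1 = a+1+b+1 from by omega]
    push_cast
    have := fact_ne (a+1+b+1)
    have := fact_ne a
    have := fact_ne b
    field_simp


open intervalIntegral Finset


lemma int_even (k : ℕ) : ∫ t in (-1:ℝ)..1, t^(2*k) = 2/(2*k+1) := by
  rw [integral_pow]
  have h1 : ((-1:ℝ))^(2*k+1) = -1 := by
    have : Odd (2*k+1) := ⟨k, by ring⟩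
    exact this.neg_one_pow
  rw [one_pow, h1]
  push_cast
  ring

lemma int_odd (k : ℕ) : ∫ t in (-1:ℝ)..1, t^(2*k+1) = 0 := by
  rw [integral_pow]
  have h1 : ((-1:ℝ))^(2*k+1+1) = 1 := by
    have : Even (2*k+2) := ⟨k+1, by ring⟩
    simpa using this.neg_one_pow
  rw [one_pow, h1]
  simp

lemma sum_even_odd (f : ℕ → ℝ) (n : ℕ) :
    ∑ k ∈ range (2*n+1), f k
      = ∑ j ∈ range (n+1), f (2*j) + ∑ j ∈ range n, f (2*j+1) := by
  induction n with
  | zero => simp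
  | succ n ih =>
    rw [show 2*(n+1)+1 = (2*n+1)+1+1 from by ring, sum_range_succ, sum_range_succ, ih,
      sum_range_succ (fun j => f (2*j)) (n+1), sum_range_succ (fun j => f (2*j+1)) n]
    simp only [show 2*(n+1) = 2*n+1+1 from by ring]
    ring

lemma recip_eq (i j : ℕ) : (1:ℝ)/((i:ℝ)+(j:ℝ)+1/2) = ∫ t in (-1:ℝ)..1, t^(2*i+2*j) := by
  rw [show 2*i+2*j = 2*(i+j) from by ring, int_even]
  have h1 : ((i:ℝ)+(j:ℝ)+1/2) ≠ 0 := by positivity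
  have h2 : (2*((i:ℝ)+(j:ℝ))+1) ≠ 0 := by positivity
  push_cast
  field_simp

lemma inner_j (n i : ℕ) :
    ∑ j ∈ range (n+1), ((2*n).choose (2*j) : ℝ) * (1/((i:ℝ)+(j:ℝ)+1/2))
      = ∑ s ∈ range (i+1), (i.choose s : ℝ) *
          ((-1)^s * 2^(2*n+2*s+1) * s.factorial * (2*n+s).factorial/((2*n+2*s+1).factorial)) := by
  have step1 : ∑ j ∈ range (n+1), ((2*n).choose (2*j) : ℝ) * (1/((i:ℝ)+(j:ℝ)+1/2))
      = ∑ j ∈ range (n+1), ∫ t in (-1:ℝ)..1, ((2*n).choose (2*j) : ℝ) * t^(2*i+2*j) := by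
    refine Finset.sum_congr rfl fun j _ => ?_
    rw [recip_eq i j, integral_const_mul]
  -- the big integral
  have keyA : ∫ t in (-1:ℝ)..1, (t^(2*i) * (1+t)^(2*n))
      = ∑ j ∈ range (n+1), ∫ t in (-1:ℝ)..1, ((2*n).choose (2*j) : ℝ) * t^(2*i+2*j) := by
    have pw : ∀ t : ℝ, t^(2*i) * (1+t)^(2*n)
        = ∑ k ∈ range (2*n+1), ((2*n).choose k : ℝ) * t^(2*i+k) := by
      intro t
      rw [show (1+t) = (t+1) from by ring, add_pow]
      rw [Finset.mul_sum]
      refine Finset.sum_congr rfl fun k _ => ?_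
      rw [pow_add]
      ring
    rw [intervalIntegral.integral_congr (g := fun t => ∑ k ∈ range (2*n+1),
        ((2*n).choose k : ℝ) * t^(2*i+k)) (fun t _ => pw t)]
    rw [intervalIntegral.integral_finset_sum (fun k _ =>
      (Continuous.intervalIntegrable (by continuity) _ _))]
    rw [sum_even_odd (fun k => ∫ t in (-1:ℝ)..1, ((2*n).choose k : ℝ) * t^(2*i+k)) n]
    have hodd : ∑ j ∈ range n, ∫ t in (-1:ℝ)..1, ((2*n).choose (2*j+1) : ℝ) * t^(2*i+(2*j+1))
        = 0 := by
      refine Finset.sum_eq_zero fun j _ => ?_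
      rw [integral_const_mul, show 2*i+(2*j+1) = 2*(i+j)+1 from by ring, int_odd, mul_zero]
    rw [hodd, add_zero]
  have keyB : ∫ t in (-1:ℝ)..1, (t^(2*i) * (1+t)^(2*n))
      = ∑ s ∈ range (i+1), (i.choose s : ℝ) *
          ((-1)^s * 2^(2*n+2*s+1) * s.factorial * (2*n+s).factorial/((2*n+2*s+1).factorial)) := by
    have pw : ∀ t : ℝ, t^(2*i) * (1+t)^(2*n)
        = ∑ s ∈ range (i+1), (i.choose s : ℝ) * ((-1)^s * ((1-t)^s * (1+t)^(2*n+s))) := by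
      intro t
      have e1 : t^(2*i) = ((t^2-1)+1)^i := by ring_nf
      rw [e1, add_pow, Finset.sum_mul]
      refine Finset.sum_congr rfl fun s _ => ?_
      have e2 : (t^2-1)^s = (-1)^s * ((1-t)^s * (1+t)^s) := by
        rw [show t^2-1 = (-1)*((1-t)*(1+t)) from by ring, mul_pow, mul_pow]
      rw [e2, pow_add]
      ring
    rw [intervalIntegral.integral_congr (fun t _ => pw t)]
    rw [intervalIntegral.integral_finset_sum (fun s _ =>
      (Continuous.intervalIntegrable (by continuity) _ _))]
    refine Finset.sum_congr rfl fun s _ => ?_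
    rw [integral_const_mul, integral_const_mul, Jint s (2*n+s),
      show s+(2*n+s)+1 = 2*n+2*s+1 from by omega]
    ring
  rw [step1, ← keyA, keyB]




lemma choose_poly (s w : ℕ) (y : ℝ) :
    ∑ i ∈ range (s+w+1), ((s+w).choose i : ℝ) * (i.choose s : ℝ) * y^i
      = ((s+w).choose s : ℝ) * y^s * (1+y)^w := by
  rw [range_eq_Ico, ← Finset.sum_Ico_consecutive _ (Nat.zero_le s) (by omega : s ≤ s+w+1)]
  have h1 : ∑ i ∈ Finset.Ico 0 s, ((s+w).choose i : ℝ) * (i.choose s : ℝ) * y^i = 0 := by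
    refine Finset.sum_eq_zero fun i hi => ?_
    have : i < s := (Finset.mem_Ico.mp hi).2
    rw [Nat.choose_eq_zero_of_lt this]
    simp
  rw [h1, zero_add, Finset.sum_Ico_eq_sum_range,
    show s+w+1-s = w+1 from by omega]
  have h2 : ∀ u ∈ range (w+1), ((s+w).choose (s+u) : ℝ) * ((s+u).choose s : ℝ) * y^(s+u)
      = ((s+w).choose s : ℝ) * y^s * ((w.choose u : ℝ) * y^u) := by
    intro u hu
    have hu' : u ≤ w := by simpa [Nat.lt_succ_iff] using hu
    have hc := Nat.choose_mul (n := s+w) (show s ≤ s+u by omega)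
    rw [show s+w-s = w from by omega, show s+u-s = u from by omega] at hc
    have hc' : ((s+w).choose (s+u) : ℝ) * ((s+u).choose s : ℝ)
        = ((s+w).choose s : ℝ) * (w.choose u : ℝ) := by exact_mod_cast congrArg (Nat.cast (R := ℝ)) hc
    rw [pow_add, hc']
    ring
  rw [Finset.sum_congr rfl h2, ← Finset.mul_sum]
  congr 1
  rw [show (1+y) = (y+1) from by ring, add_pow]
  refine (Finset.sum_congr rfl fun u _ => ?_).symm
  simp [mul_comm]

lemma dsum (n s w : ℕ) :
    ∑ i ∈ range ((s+w)+1),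
      ((-1)^i * ((s+w).choose i : ℝ) * (n+i).factorial * ((s+w)+n+1).factorial
        / (n.factorial * ((s+w)+n+1+i).factorial)) * (i.choose s : ℝ)
    = (-1)^s * ((s+w).choose s : ℝ) * ((s+w)+n+1).factorial * (n+s).factorial
        * (s+2*w).factorial / (n.factorial * (s+w).factorial * (2*(s+w)+n+1).factorial) := by
  set m := s + w with hm
  have step1 : ∀ i ∈ range (m+1),
      ((-1)^i * (m.choose i : ℝ) * (n+i).factorial * (m+n+1).factorial
        / (n.factorial * (m+n+1+i).factorial)) * (i.choose s : ℝ)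
      = ((m+n+1).factorial / (n.factorial * m.factorial)) *
          ∫ x in (0:ℝ)..1, ((-1)^i * (m.choose i : ℝ) * (i.choose s : ℝ)) * (x^(n+i)*(1-x)^m) := by
    intro i _
    rw [integral_const_mul, B01 m (n+i), show n+i+m+1 = m+n+1+i from by omega]
    have := fact_ne n
    have := fact_ne m
    have := fact_ne (m+n+1+i)
    field_simp
  rw [Finset.sum_congr rfl step1, ← Finset.mul_sum,
    ← intervalIntegral.integral_finset_sum (fun i _ =>
      (Continuous.intervalIntegrable (by continuity) _ _))]
  have pw : ∀ x : ℝ, ∑ i ∈ range (m+1), ((-1)^i * (m.choose i : ℝ) * (i.choose s : ℝ)) * (x^(n+i)*(1-x)^m)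
      = ((m.choose s : ℝ) * (-1)^s) * (x^(n+s)*(1-x)^(m+w)) := by
    intro x
    have e1 : ∀ i ∈ range (m+1), ((-1)^i * (m.choose i : ℝ) * (i.choose s : ℝ)) * (x^(n+i)*(1-x)^m)
        = (x^n*(1-x)^m) * ((m.choose i : ℝ) * (i.choose s : ℝ) * (-x)^i) := by
      intro i _
      rw [pow_add, neg_pow]
      ring
    rw [Finset.sum_congr rfl e1, ← Finset.mul_sum, hm, choose_poly s w (-x)]
    rw [show (1+(-x)) = (1-x) from by ring, neg_pow, pow_add, pow_add]
    ring
  rw [intervalIntegral.integral_congr (fun x _ => pw x), integral_const_mul,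
    B01 (m+w) (n+s), show n+s+(m+w)+1 = 2*m+n+1 from by omega,
    show m+w = s+2*w from by omega]
  have := fact_ne n
  have := fact_ne m
  have := fact_ne (2*m+n+1)
  field_simp



noncomputable def Tt (m n s : ℕ) : ℝ :=
  (n+s).factorial * (2*m-s).factorial * 4^s * (2*n+s).factorial
    / ((m-s).factorial * (2*n+2*s+1).factorial)

noncomputable def Gg (m n s : ℕ) : ℝ :=
  -((s:ℝ) * (2*s+2*n+1) * (n+s).factorial * (2*m+1-s).factorial * 4^s * (2*n+s).factorial)
    / ((2*(m:ℝ)+2*(n:ℝ)+3) * ((m+1-s).factorial * (2*n+2*s+1).factorial))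

lemma step_term (n s u : ℕ) :
    Tt (s+u+1) n s = (8*((s+u:ℝ)+1)*((s+u:ℝ)+(n:ℝ)+1)/(2*(s+u:ℝ)+2*(n:ℝ)+3)) * Tt (s+u) n s
      + (Gg (s+u) n (s+1) - Gg (s+u) n s) := by
  simp only [Tt, Gg]
  rw [show 2*(s+u+1)-s = s+2*u+2 from by omega, show (s+u+1)-s = u+1 from by omega,
    show 2*(s+u)-s = s+2*u from by omega, show (s+u)-s = u from by omega,
    show 2*(s+u)+1-(s+1) = s+2*u from by omega, show (s+u)+1-(s+1) = u from by omega,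
    show 2*(s+u)+1-s = s+2*u+1 from by omega]
  rw [show s+2*u+2 = (s+2*u+1)+1 from rfl, Nat.factorial_succ (s+2*u+1),
    Nat.factorial_succ (s+2*u), Nat.factorial_succ u,
    show n+(s+1) = (n+s)+1 from rfl, Nat.factorial_succ (n+s),
    show 2*n+(s+1) = (2*n+s)+1 from rfl, Nat.factorial_succ (2*n+s),
    show 2*n+2*(s+1)+1 = (2*n+2*s+2)+1 from by omega, Nat.factorial_succ (2*n+2*s+2),
    show 2*n+2*s+2 = (2*n+2*s+1)+1 from rfl, Nat.factorial_succ (2*n+2*s+1),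
    pow_succ 4 s]
  push_cast
  have h1 := fact_ne u
  have h2 := fact_ne (2*n+2*s+1)
  have h3 := fact_ne (n+s)
  have h4 := fact_ne (s+2*u)
  have h5 := fact_ne (2*n+s)
  have h6 : (4:ℝ)^s ≠ 0 := by positivity
  have h7 : ((u:ℝ)+1) ≠ 0 := by positivity
  have h8 : (2*((s:ℝ)+(u:ℝ))+2*(n:ℝ)+3) ≠ 0 := by positivity
  have h9 : ((2:ℝ)*n+2*s+2+1) ≠ 0 := by positivity
  have h10 : ((2:ℝ)*n+2*s+1+1) ≠ 0 := by positivity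
  field_simp
  ring

lemma step_term' (n m s : ℕ) (h : s ≤ m) :
    Tt (m+1) n s = (8*((m:ℝ)+1)*((m:ℝ)+(n:ℝ)+1)/(2*(m:ℝ)+2*(n:ℝ)+3)) * Tt m n s
      + (Gg m n (s+1) - Gg m n s) := by
  obtain ⟨u, rfl⟩ : ∃ u, m = s + u := ⟨m - s, by omega⟩
  have := step_term n s u
  push_cast at this ⊢
  convert this using 4

lemma Gg_zero (m n : ℕ) : Gg m n 0 = 0 := by simp [Gg]

lemma Gg_top (m n : ℕ) : Gg m n (m+1) = - Tt (m+1) n (m+1) := by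
  simp only [Gg, Tt]
  rw [show 2*m+1-(m+1) = m from by omega, show m+1-(m+1) = 0 from by omega,
    show 2*(m+1)-(m+1) = m+1 from by omega,
    Nat.factorial_succ m]
  push_cast
  have h1 := fact_ne m
  have h2 := fact_ne (2*n+2*(m+1)+1)
  have h3 : (2*(m:ℝ)+2*(n:ℝ)+3) ≠ 0 := by positivity
  field_simp
  ring

lemma Csum (n : ℕ) : ∀ m, ∑ s ∈ range (m+1), Tt m n s
    = 2^(4*m+1)*m.factorial*(m+n).factorial*(m+n+1).factorial*(2*n).factorial
      / (n.factorial*(2*m+2*n+2).factorial) := by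
  intro m
  induction m with
  | zero =>
    rw [Finset.sum_range_one]
    simp only [Tt]
    norm_num
    rw [show 2*n+2 = (2*n+1)+1 from rfl, Nat.factorial_succ (2*n+1),
      Nat.factorial_succ (2*n), Nat.factorial_succ n]
    push_cast
    have h1 := fact_ne n
    have h2 := fact_ne (2*n)
    have h3 : ((2:ℝ)*n+1) ≠ 0 := by positivity
    have h4 : ((2:ℝ)*n+1+1) ≠ 0 := by positivity
    have h5 : ((n:ℝ)+1) ≠ 0 := by positivity
    field_simp
    ring
  | succ m ih =>
    rw [Finset.sum_range_succ,
      Finset.sum_congr rfl (fun s hs => step_term' n m s (by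
        simpa [Nat.lt_succ_iff] using hs)),
      Finset.sum_add_distrib, ← Finset.mul_sum, Finset.sum_range_sub (Gg m n),
      Gg_zero, Gg_top, ih]
    have hfact1 : (((m+1).factorial : ℕ) : ℝ) = ((m:ℝ)+1) * m.factorial := by
      rw [Nat.factorial_succ]; push_cast; ring
    have hfact5 : (((m+n+1).factorial : ℕ) : ℝ) = ((m:ℝ)+n+1) * (m+n).factorial := by
      rw [Nat.factorial_succ]; push_cast; ring
    have hfact2 : (((m+1+n).factorial : ℕ) : ℝ) = ((m:ℝ)+n+1) * (m+n).factorial := by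
      rw [show m+1+n = (m+n)+1 from by omega, Nat.factorial_succ]; push_cast; ring
    have hfact3 : (((m+1+n+1).factorial : ℕ) : ℝ)
        = ((m:ℝ)+n+2) * (((m:ℝ)+n+1) * (m+n).factorial) := by
      rw [show m+1+n+1 = ((m+n)+1)+1 from by omega, Nat.factorial_succ, Nat.factorial_succ]
      push_cast; ring
    have hfact4 : (((2*(m+1)+2*n+2).factorial : ℕ) : ℝ)
        = (2*(m:ℝ)+2*n+4) * ((2*(m:ℝ)+2*n+3) * (2*m+2*n+2).factorial) := by
      rw [show 2*(m+1)+2*n+2 = ((2*m+2*n+2)+1)+1 from by omega, Nat.factorial_succ,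
        Nat.factorial_succ]
      push_cast; ring
    have hpow : (2:ℝ)^(4*(m+1)+1) = 16 * 2^(4*m+1) := by
      rw [show 4*(m+1)+1 = (4*m+1)+4 from by omega, pow_add]; ring
    rw [hfact1, hfact2, hfact3, hfact4, hfact5, hpow]
    have h1 := fact_ne n
    have h2 := fact_ne (2*m+2*n+2)
    have h7 : (2*(m:ℝ)+2*(n:ℝ)+3) ≠ 0 := by positivity
    have h8 : (2*(m:ℝ)+2*(n:ℝ)+4) ≠ 0 := by positivity
    field_simp
    ring

theorem S_formula (m n : ℕ) :
    (∑ i ∈ Finset.range (m + 1), ∑ j ∈ Finset.range (n + 1),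
      (poch (-(m:ℝ)) i * poch ((n:ℝ) + 1) i / ((i.factorial : ℝ) * poch ((m:ℝ) + (n:ℝ) + 2) i)) *
      (poch (-(n:ℝ)) j * poch (1/2 - (n:ℝ)) j / ((j.factorial : ℝ) * poch (1/2) j)) *
      (1 / ((i:ℝ) + (j:ℝ) + 1/2))) =
    2^(2*m+2*n) * ((m.factorial : ℝ) * ((m+n).factorial : ℝ) * ((m+n+1).factorial : ℝ) *
        poch (1/2) n) /
      ((n.factorial : ℝ) * ((n + 2*m + 1).factorial : ℝ) * poch (1/2) (m + n + 1)) := by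
  set β : ℕ → ℝ := fun s =>
    (-1)^s * 2^(2*n+2*s+1) * s.factorial * (2*n+s).factorial/((2*n+2*s+1).factorial) with hβ
  have step1 : ∀ i ∈ range (m+1),
      (∑ j ∈ Finset.range (n + 1),
        (poch (-(m:ℝ)) i * poch ((n:ℝ) + 1) i / ((i.factorial : ℝ) * poch ((m:ℝ) + (n:ℝ) + 2) i)) *
        (poch (-(n:ℝ)) j * poch (1/2 - (n:ℝ)) j / ((j.factorial : ℝ) * poch (1/2) j)) *
        (1 / ((i:ℝ) + (j:ℝ) + 1/2)))
      = ∑ s ∈ range (m+1),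
          ((-1)^i * (m.choose i : ℝ) * (n+i).factorial * (m+n+1).factorial
            / (n.factorial * (m+n+1+i).factorial)) * ((i.choose s : ℝ) * β s) := by
    intro i hi
    have hi' : i ≤ m := by simpa [Nat.lt_succ_iff] using hi
    have e1 : ∀ j ∈ range (n+1),
        (poch (-(m:ℝ)) i * poch ((n:ℝ) + 1) i / ((i.factorial : ℝ) * poch ((m:ℝ) + (n:ℝ) + 2) i)) *
        (poch (-(n:ℝ)) j * poch (1/2 - (n:ℝ)) j / ((j.factorial : ℝ) * poch (1/2) j)) *
        (1 / ((i:ℝ) + (j:ℝ) + 1/2))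
        = (poch (-(m:ℝ)) i * poch ((n:ℝ) + 1) i / ((i.factorial : ℝ) * poch ((m:ℝ) + (n:ℝ) + 2) i)) *
          (((2*n).choose (2*j) : ℝ) * (1 / ((i:ℝ) + (j:ℝ) + 1/2))) := by
      intro j hj
      rw [cj_eq n j (by simpa [Nat.lt_succ_iff] using hj)]
      ring
    rw [Finset.sum_congr rfl e1, ← Finset.mul_sum, inner_j n i, ai_eq m n i hi']
    rw [Finset.mul_sum]
    rw [← Finset.sum_subset (Finset.range_subset_range.mpr (by omega : i+1 ≤ m+1))
      (fun s _ hs => by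
        have hlt : i < s := by
          simp only [Finset.mem_range] at hs
          omega
        rw [Nat.choose_eq_zero_of_lt hlt]
        simp)]
  rw [Finset.sum_congr rfl step1, Finset.sum_comm]
  have step2 : ∀ s ∈ range (m+1),
      (∑ i ∈ range (m+1),
        ((-1)^i * (m.choose i : ℝ) * (n+i).factorial * (m+n+1).factorial
          / (n.factorial * (m+n+1+i).factorial)) * ((i.choose s : ℝ) * β s))
      = ((m+n+1).factorial * 2^(2*n+1) / (n.factorial * (2*m+n+1).factorial)) * Tt m n s := by
    intro s hs
    have hs' : s ≤ m := by simpa [Nat.lt_succ_iff] using hs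
    obtain ⟨w, rfl⟩ : ∃ w, m = s + w := ⟨m - s, by omega⟩
    have e2 : ∀ i ∈ range ((s+w)+1),
        ((-1)^i * ((s+w).choose i : ℝ) * (n+i).factorial * ((s+w)+n+1).factorial
          / (n.factorial * ((s+w)+n+1+i).factorial)) * ((i.choose s : ℝ) * β s)
        = (((-1)^i * ((s+w).choose i : ℝ) * (n+i).factorial * ((s+w)+n+1).factorial
          / (n.factorial * ((s+w)+n+1+i).factorial)) * (i.choose s : ℝ)) * β s := by
      intro i _; ring
    rw [Finset.sum_congr rfl e2, ← Finset.sum_mul, dsum n s w]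
    simp only [Tt]
    rw [show 2*(s+w)-s = s+2*w from by omega, show (s+w)-s = w from by omega]
    simp only [hβ]
    rw [Nat.cast_choose ℝ (show s ≤ s+w by omega), show s+w-s = w from by omega]
    have h1 := fact_ne n
    have h2 := fact_ne s
    have h3 := fact_ne w
    have h4 := fact_ne (2*(s+w)+n+1)
    have h5 := fact_ne (2*n+2*s+1)
    have h6 := fact_ne (s+w)
    have hp : (2:ℝ)^(2*n+2*s+1) = 2^(2*n+1) * 4^s := by
      rw [show (4:ℝ) = 2^2 from by norm_num, ← pow_mul, ← pow_add]
      congr 1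
      omega
    rw [hp]
    field_simp
    ring_nf
    rw [show ((-1:ℝ))^(s*2) = 1 from Even.neg_one_pow ⟨s, by ring⟩]
  rw [Finset.sum_congr rfl step2, ← Finset.mul_sum, Csum n m]
  rw [poch_half n, poch_half (m+n+1), show 2*(m+n+1) = 2*m+2*n+2 from by omega,
    show n+2*m+1 = 2*m+n+1 from by omega]
  have e4 : (4:ℝ)^n = 2^(2*n) := by
    rw [show (4:ℝ) = 2^2 from by norm_num, ← pow_mul]
  have e5 : (4:ℝ)^(m+n+1) = 2^(2*m+2*n+2) := by
    rw [show (4:ℝ) = 2^2 from by norm_num, ← pow_mul]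
    congr 1
    omega
  rw [e4, e5]
  have h1 := fact_ne n
  have h2 := fact_ne m
  have h3 := fact_ne (m+n)
  have h4 := fact_ne (m+n+1)
  have h5 := fact_ne (2*n)
  have h6 := fact_ne (2*m+n+1)
  have h7 := fact_ne (2*m+2*n+2)
  have h8 : (2:ℝ)^(2*n) ≠ 0 := by positivity
  have h9 : (2:ℝ)^(2*m+2*n+2) ≠ 0 := by positivity
  field_simp
  ring
end

section
/- For every real α > 0, let I_α = (π / 2^(2+8α)) · Γ(2α)² / (Γ(2α + 3/2) Γ(2α + 5/2)). If 2α is a positive integer, then 1/I_α = 2(4α+3) · C(2α+2, 2)² · C(4α+1, 2α+2)², where C denotes the binomial coefficient; in particular 1/I_α is a positive integer. -/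
open Real

lemma gamma_nat_add_half (n : ℕ) :
    Gamma ((n : ℝ) + 1/2) = (2*n).factorial * Real.sqrt π / (4^n * n.factorial) := by
  induction n with
  | zero => norm_num [Real.Gamma_one_half_eq]
  | succ k ih =>
      have h : ((k+1 : ℕ) : ℝ) + 1/2 = ((k:ℝ) + 1/2) + 1 := by push_cast; try ring
      rw [h, Real.Gamma_add_one (by positivity), ih]
      have h2 : (2*(k+1)).factorial = (2*k+2) * ((2*k+1) * (2*k).factorial) := by
        rw [show 2*(k+1) = (2*k+1)+1 by ring, Nat.factorial_succ, Nat.factorial_succ]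
      rw [h2]
      push_cast [Nat.factorial_succ]
      have hk : (k.factorial : ℝ) ≠ 0 := Nat.cast_ne_zero.mpr k.factorial_ne_zero
      field_simp
      ring

theorem inv_I_alpha_integer (m : ℕ) (hm : 1 ≤ m) :
    (π / 2 ^ (2 + 8*((m:ℝ)/2)) *
      (Gamma (2*((m:ℝ)/2))^2 / (Gamma (2*((m:ℝ)/2) + 3/2) * Gamma (2*((m:ℝ)/2) + 5/2))))⁻¹ =
      ((2 * (2*m + 3) * (Nat.choose (m + 2) 2)^2 * (Nat.choose (2*m + 1) (m + 2))^2 : ℕ) : ℝ) := by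
  obtain ⟨k, rfl⟩ : ∃ k, m = k + 1 := ⟨m - 1, (Nat.succ_pred_eq_of_pos hm).symm⟩
  have e0 : 2*(((k+1:ℕ):ℝ)/2) = ((k:ℝ)+1) := by push_cast; try ring
  have e1 : Gamma (2*(((k+1:ℕ):ℝ)/2)) = k.factorial := by
    rw [e0]; exact_mod_cast Real.Gamma_nat_eq_factorial k
  have e2 : Gamma (2*(((k+1:ℕ):ℝ)/2) + 3/2)
      = (2*(k+2)).factorial * Real.sqrt π / (4^(k+2) * (k+2).factorial) := by
    rw [e0, show ((k:ℝ)+1) + 3/2 = ((k+2 : ℕ):ℝ) + 1/2 by push_cast; ring,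
      gamma_nat_add_half]
  have e3 : Gamma (2*(((k+1:ℕ):ℝ)/2) + 5/2)
      = (2*(k+3)).factorial * Real.sqrt π / (4^(k+3) * (k+3).factorial) := by
    rw [e0, show ((k:ℝ)+1) + 5/2 = ((k+3 : ℕ):ℝ) + 1/2 by push_cast; ring,
      gamma_nat_add_half]
  have hs : Real.sqrt π * Real.sqrt π = π := Real.mul_self_sqrt pi_pos.le
  have eprod : Gamma (2*(((k+1:ℕ):ℝ)/2) + 3/2) * Gamma (2*(((k+1:ℕ):ℝ)/2) + 5/2)
      = ((2*(k+2)).factorial * (2*(k+3)).factorial : ℝ) * (Real.sqrt π * Real.sqrt π)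
        / ((4^(k+2) * (k+2).factorial) * (4^(k+3) * (k+3).factorial)) := by
    rw [e2, e3, div_mul_div_comm]; ring_nf
  have epow : (2:ℝ) ^ (2 + 8*(((k+1:ℕ):ℝ)/2)) = 2 ^ (4*k+6 : ℕ) := by
    rw [show (2 + 8*(((k+1:ℕ):ℝ)/2)) = ((4*k+6 : ℕ):ℝ) by push_cast; ring,
      Real.rpow_natCast]
  rw [e1, eprod, hs, epow]
  -- factorial expansions
  have f1 : ((2*(k+2)).factorial : ℝ) = (2*k+4) * (2*k+3).factorial := by
    rw [show 2*(k+2) = (2*k+3)+1 by ring, Nat.factorial_succ]; push_cast; try ring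
  have f2 : ((2*(k+3)).factorial : ℝ)
      = (2*k+6) * ((2*k+5) * ((2*k+4) * (2*k+3).factorial)) := by
    rw [show 2*(k+3) = ((((2*k+3)+1)+1)+1) by ring, Nat.factorial_succ,
      Nat.factorial_succ, Nat.factorial_succ]; push_cast; try ring
  have f3 : (((k+2)).factorial : ℝ) = (k+2) * ((k+1) * k.factorial) := by
    rw [Nat.factorial_succ, Nat.factorial_succ]; push_cast; try ring
  have f4 : (((k+3)).factorial : ℝ) = (k+3) * ((k+2) * ((k+1) * k.factorial)) := by
    rw [Nat.factorial_succ, Nat.factorial_succ, Nat.factorial_succ]; push_cast; try ring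
  have c1 : (((k+1+2).choose 2 : ℕ) : ℝ)
      = (k+3).factorial / (2 * (k+1).factorial) := by
    have h : (k+1+2).choose 2 = (k+3).choose 2 := rfl
    rw [h, Nat.cast_choose ℝ (by omega : 2 ≤ k+3),
      show k+3-2 = k+1 from by omega]
    norm_num [Nat.factorial]
  have c2 : (((2*(k+1)+1).choose (k+1+2) : ℕ) : ℝ)
      = (2*k+3).factorial / ((k+3).factorial * k.factorial) := by
    have h : (2*(k+1)+1).choose (k+1+2) = (2*k+3).choose (k+3) := by congr 1 <;> omega
    rw [h, Nat.cast_choose ℝ (by omega : k+3 ≤ 2*k+3), show 2*k+3-(k+3) = k from by omega]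
  have c5 : (((k+1).factorial : ℝ)) = (k+1) * k.factorial := by
    rw [Nat.factorial_succ]; push_cast; try ring
  -- powers of two
  have hp1 : ((2:ℝ)) ^ (4*k+6 : ℕ) = ((2:ℝ)^k)^4 * 64 := by
    rw [show 4*k+6 = k*4+6 by ring, pow_add, pow_mul]; norm_num
  have hp2 : ((4:ℝ)) ^ (k+2 : ℕ) = ((2:ℝ)^k)^2 * 16 := by
    rw [show (4:ℝ) = 2^2 by norm_num, ← pow_mul, show 2*(k+2) = k*2+4 by ring,
      pow_add, pow_mul]; norm_num
  have hp3 : ((4:ℝ)) ^ (k+3 : ℕ) = ((2:ℝ)^k)^2 * 64 := by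
    rw [show (4:ℝ) = 2^2 by norm_num, ← pow_mul, show 2*(k+3) = k*2+6 by ring,
      pow_add, pow_mul]; norm_num
  push_cast [c1, c2, c5]
  rw [f1, f2, f3, f4, hp1, hp2, hp3]
  have hk : (k.factorial : ℝ) ≠ 0 := Nat.cast_ne_zero.mpr k.factorial_ne_zero
  have hb : ((2*k+3).factorial : ℝ) ≠ 0 := Nat.cast_ne_zero.mpr (Nat.factorial_ne_zero _)
  have hpi : π ≠ 0 := pi_ne_zero
  have h2k : ((2:ℝ)^k) ≠ 0 := by positivity
  field_simp
  ring
end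

section
/- Let ξ be the 4×4 Hermitian X-matrix with diagonal (t₁, t₂, t₃+t₆, t₄+t₅), (1,4)-entry √(t₁t₅)e^{iθ₅}, (2,3)-entry √(t₂t₆)e^{iθ₆}, where tᵢ ≥ 0 and θ₅, θ₆ ∈ ℝ. Then det ξ = t₁t₂t₃t₄ and det ξ^PT = (t₁t₄ + t₁t₅ - t₂t₆)(t₂t₃ + t₂t₆ - t₁t₅), where ξ^PT swaps the (1,4)/(2,3) off-diagonal entries (and their conjugates). -/
open Matrix

/-- The generic positive semidefinite complex X-matrix in the `t`-coordinates. -/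
noncomputable def xiMat (t₁ t₂ t₃ t₄ t₅ t₆ θ₅ θ₆ : ℝ) : Matrix (Fin 4) (Fin 4) ℂ :=
  !![(t₁ : ℂ), 0, 0, (Real.sqrt (t₁*t₅) : ℂ) * Complex.exp ((θ₅ : ℂ) * Complex.I);
     0, (t₂ : ℂ), (Real.sqrt (t₂*t₆) : ℂ) * Complex.exp ((θ₆ : ℂ) * Complex.I), 0;
     0, (Real.sqrt (t₂*t₆) : ℂ) * Complex.exp (-((θ₆ : ℂ) * Complex.I)), (t₃ : ℂ) + (t₆ : ℂ), 0;
     (Real.sqrt (t₁*t₅) : ℂ) * Complex.exp (-((θ₅ : ℂ) * Complex.I)), 0, 0, (t₄ : ℂ) + (t₅ : ℂ)]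

/-- The partial transpose of `xiMat`: the (1,4)/(2,3) off-diagonal entries are swapped. -/
noncomputable def xiMatPT (t₁ t₂ t₃ t₄ t₅ t₆ θ₅ θ₆ : ℝ) : Matrix (Fin 4) (Fin 4) ℂ :=
  !![(t₁ : ℂ), 0, 0, (Real.sqrt (t₂*t₆) : ℂ) * Complex.exp ((θ₆ : ℂ) * Complex.I);
     0, (t₂ : ℂ), (Real.sqrt (t₁*t₅) : ℂ) * Complex.exp ((θ₅ : ℂ) * Complex.I), 0;
     0, (Real.sqrt (t₁*t₅) : ℂ) * Complex.exp (-((θ₅ : ℂ) * Complex.I)), (t₃ : ℂ) + (t₆ : ℂ), 0;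
     (Real.sqrt (t₂*t₆) : ℂ) * Complex.exp (-((θ₆ : ℂ) * Complex.I)), 0, 0, (t₄ : ℂ) + (t₅ : ℂ)]

theorem det_xi_and_det_xiPT (t₁ t₂ t₃ t₄ t₅ t₆ θ₅ θ₆ : ℝ)
    (h1 : 0 ≤ t₁) (h2 : 0 ≤ t₂) (h3 : 0 ≤ t₃) (h4 : 0 ≤ t₄) (h5 : 0 ≤ t₅) (h6 : 0 ≤ t₆) :
    (xiMat t₁ t₂ t₃ t₄ t₅ t₆ θ₅ θ₆).det = ((t₁*t₂*t₃*t₄ : ℝ) : ℂ) ∧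
    (xiMatPT t₁ t₂ t₃ t₄ t₅ t₆ θ₅ θ₆).det =
      (((t₁*t₄ + t₁*t₅ - t₂*t₆) * (t₂*t₃ + t₂*t₆ - t₁*t₅) : ℝ) : ℂ) := by
  have e5 : Complex.exp ((θ₅:ℂ)*Complex.I) * Complex.exp (-((θ₅:ℂ)*Complex.I)) = 1 := by
    rw [← Complex.exp_add, add_neg_cancel, Complex.exp_zero]
  have e6 : Complex.exp ((θ₆:ℂ)*Complex.I) * Complex.exp (-((θ₆:ℂ)*Complex.I)) = 1 := by
    rw [← Complex.exp_add, add_neg_cancel, Complex.exp_zero]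
  have s5 : ((Real.sqrt (t₁*t₅):ℂ)) * ((Real.sqrt (t₁*t₅):ℂ)) = ((t₁*t₅ : ℝ):ℂ) := by
    norm_cast
    exact Real.mul_self_sqrt (mul_nonneg h1 h5)
  have s6 : ((Real.sqrt (t₂*t₆):ℂ)) * ((Real.sqrt (t₂*t₆):ℂ)) = ((t₂*t₆ : ℝ):ℂ) := by
    norm_cast
    exact Real.mul_self_sqrt (mul_nonneg h2 h6)
  have p5 : ((Real.sqrt (t₁*t₅):ℂ) * Complex.exp ((θ₅:ℂ) * Complex.I)) *
      ((Real.sqrt (t₁*t₅):ℂ) * Complex.exp (-((θ₅:ℂ) * Complex.I))) = (t₁:ℂ) * t₅ := by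
    rw [mul_mul_mul_comm, s5, e5, mul_one]; push_cast; ring
  have p6 : ((Real.sqrt (t₂*t₆):ℂ) * Complex.exp ((θ₆:ℂ) * Complex.I)) *
      ((Real.sqrt (t₂*t₆):ℂ) * Complex.exp (-((θ₆:ℂ) * Complex.I))) = (t₂:ℂ) * t₆ := by
    rw [mul_mul_mul_comm, s6, e6, mul_one]; push_cast; ring
  constructor
  · rw [xiMat]
    simp [Matrix.det_succ_row_zero, Fin.sum_univ_succ,
      show (Fin.castSucc 2 : Fin 4) = 2 from rfl,
      show (Fin.succAbove (3 : Fin 4) (2 : Fin 3)) = 2 from rfl]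
    push_cast
    linear_combination
      ((Real.sqrt (t₂*t₆):ℂ) * Complex.exp ((θ₆:ℂ) * Complex.I) *
        ((Real.sqrt (t₂*t₆):ℂ) * Complex.exp (-((θ₆:ℂ) * Complex.I))) -
        (t₂:ℂ) * ((t₃:ℂ) + t₆)) * p5 +
      ((t₁:ℂ) * t₅ - (t₁:ℂ) * ((t₄:ℂ) + t₅)) * p6
  · rw [xiMatPT]
    simp [Matrix.det_succ_row_zero, Fin.sum_univ_succ,
      show (Fin.castSucc 2 : Fin 4) = 2 from rfl,
      show (Fin.succAbove (3 : Fin 4) (2 : Fin 3)) = 2 from rfl]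
    push_cast
    linear_combination
      ((t₂:ℂ) * t₆ - (t₁:ℂ) * ((t₄:ℂ) + t₅)) * p5 +
      ((Real.sqrt (t₁*t₅):ℂ) * Complex.exp ((θ₅:ℂ) * Complex.I) *
        ((Real.sqrt (t₁*t₅):ℂ) * Complex.exp (-((θ₅:ℂ) * Complex.I))) -
        (t₂:ℂ) * ((t₃:ℂ) + t₆)) * p6
end
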